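/- Let $-\xi$ be a subordinator with Laplace exponent $\phi$, drift $d>0$, killing rate $q\ge0$ and Lévy measure $\Pi$, and let $I=\int_0^\zeta e^{\xi_s}ds$. For $\gamma>0$, suppose there is a random variable $R_\gamma$ independent of $I$ with $R_\gamma I \overset{d}{=}\mathbf{B}_\gamma$ (Beta with density $\gamma(1-y)^{\gamma-1}$ on $(0,1)$). Then $\mathbb{E}[R_\gamma^n]=\prod_{i=1}^n \frac{\phi(i)}{i+\gamma}$ for all $n\ge 1$, the essential supremum of $R_\gamma$ equals $d$, and necessarily $\Pi(0,\infty)+q\le d\gamma$. -/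

import Mathlib

open MeasureTheory ProbabilityTheory Filter Real Set
open scoped ENNReal Topology

lemma beta_mom (γ : ℝ) (hγ : 0 < γ) (n : ℕ) :
    ∫ y in Ioo (0:ℝ) 1, (γ * (1-y) ^ (γ-1)) * y ^ n
      = ∏ i ∈ Finset.Icc 1 n, (i:ℝ)/((i:ℝ)+γ) := by
  have key : (∫ y in (0:ℝ)..1, (1-y) ^ (γ-1) * y ^ n)
      = ((Nat.factorial n : ℕ) : ℝ) / ∏ j ∈ Finset.range (n+1), (γ + (j:ℝ)) := by
    have hβ : Complex.betaIntegral (γ:ℂ) (n+1)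
        = ((Nat.factorial n : ℕ) : ℂ) / ∏ j ∈ Finset.range (n+1), ((γ:ℂ) + j) :=
      Complex.betaIntegral_eval_nat_add_one_right (by simpa using hγ) n
    rw [← Complex.betaIntegral_symm] at hβ
    have h2 : Complex.betaIntegral ((n:ℂ)+1) (γ:ℂ)
        = ((∫ y in (0:ℝ)..1, (1-y) ^ (γ-1) * y ^ n : ℝ) : ℂ) := by
      rw [Complex.betaIntegral, ← intervalIntegral.integral_ofReal]
      apply intervalIntegral.integral_congr
      intro x hx
      rw [uIcc_of_le (by norm_num : (0:ℝ) ≤ 1)] at hx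
      have h1x : (0:ℝ) ≤ 1 - x := by linarith [hx.2]
      push_cast
      rw [add_sub_cancel_right, Complex.cpow_natCast]
      rw [show ((γ:ℂ) - 1) = ((γ - 1 : ℝ) : ℂ) by push_cast; ring]
      rw [show ((1:ℂ) - (x:ℂ)) = (((1 - x : ℝ)) : ℂ) by push_cast; ring]
      rw [← Complex.ofReal_cpow h1x]
      push_cast
      ring
    rw [h2] at hβ
    have h3 : (((∫ y in (0:ℝ)..1, (1-y) ^ (γ-1) * y ^ n : ℝ)) : ℂ)
        = ((((Nat.factorial n : ℕ) : ℝ) / ∏ j ∈ Finset.range (n+1), (γ + (j:ℝ)) : ℝ) : ℂ) := by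
      rw [hβ]; push_cast; ring
    exact_mod_cast h3
  have hIoo : (∫ y in Ioo (0:ℝ) 1, (γ * (1-y) ^ (γ-1)) * y ^ n)
      = γ * ∫ y in (0:ℝ)..1, (1-y) ^ (γ-1) * y ^ n := by
    rw [intervalIntegral.integral_of_le (by norm_num : (0:ℝ) ≤ 1),
      ← MeasureTheory.integral_Ioc_eq_integral_Ioo, ← MeasureTheory.integral_const_mul]
    congr 1 with y
    ring
  rw [hIoo, key]
  rw [Finset.prod_range_succ']
  push_cast
  rw [add_zero]
  have hprod2 : (0:ℝ) < ∏ j ∈ Finset.range n, (γ + ((j:ℝ)+1)) :=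
    Finset.prod_pos fun j _ => by positivity
  have hIcc : ∏ i ∈ Finset.Icc 1 n, ((i:ℝ)/((i:ℝ)+γ))
      = (∏ i ∈ Finset.range n, ((i:ℝ)+1)) / ∏ j ∈ Finset.range n, (γ + ((j:ℝ)+1)) := by
    rw [← Finset.prod_div_distrib]
    rw [show Finset.Icc 1 n = Finset.Ico 1 (n+1) by rfl, Finset.prod_Ico_eq_prod_range]
    simp only [Nat.add_sub_cancel]
    apply Finset.prod_congr rfl
    intro i _
    push_cast
    ring_nf
  rw [hIcc]
  have hfac : (∏ i ∈ Finset.range n, ((i:ℝ)+1)) = ((Nat.factorial n : ℕ) : ℝ) := by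
    rw [← Finset.prod_range_add_one_eq_factorial n]
    push_cast
    rfl
  rw [hfac]
  field_simp

lemma prod_one_add_ge (s : Finset ℕ) (f : ℕ → ℝ) (h : ∀ i ∈ s, 0 ≤ f i) :
    1 + ∑ i ∈ s, f i ≤ ∏ i ∈ s, (1 + f i) := by
  classical
  induction s using Finset.induction_on with
  | empty => simp
  | @insert a s ha ih =>
    rw [Finset.sum_insert ha, Finset.prod_insert ha]
    have h1 : 0 ≤ f a := h a (Finset.mem_insert_self a s)
    have h2 : 1 + ∑ i ∈ s, f i ≤ ∏ i ∈ s, (1 + f i) :=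
      ih fun i hi => h i (Finset.mem_insert_of_mem hi)
    have h3 : 0 ≤ ∑ i ∈ s, f i := Finset.sum_nonneg fun i hi => h i (Finset.mem_insert_of_mem hi)
    nlinarith

set_option maxHeartbeats 2000000 in
theorem stmt8 {Ω : Type*} [MeasurableSpace Ω] (μ : Measure Ω) [IsProbabilityMeasure μ]
    (q d : ℝ) (hq : 0 ≤ q) (hd : 0 < d)
    (Pim : Measure ℝ) (hPimsupp : ∀ᵐ x ∂Pim, 0 < x)
    (φ : ℝ → ℝ)
    (hφ : ∀ lam > (0:ℝ),
      φ lam = q + d * lam + ∫ x in Set.Ioi (0:ℝ), (1 - Real.exp (-lam * x)) ∂Pim)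
    (I R : Ω → ℝ) (hI : Measurable I) (hR : Measurable R)
    (hInn : 0 ≤ᵐ[μ] I) (hRnn : 0 ≤ᵐ[μ] R)
    (hImom : ∀ n : ℕ, 1 ≤ n → ∫ ω, I ω ^ n ∂μ = ∏ i ∈ Finset.Icc 1 n, (i:ℝ) / φ i)
    (hIsupp : ∀ᵐ ω ∂μ, I ω ≤ 1 / d)
    (hIsupp' : ∀ ε > (0:ℝ), 0 < μ {ω | 1/d - ε < I ω})
    (γ : ℝ) (hγ : 0 < γ)
    (hindep : IndepFun R I μ)
    (hlaw : Measure.map (fun ω => R ω * I ω) μ =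
      (volume.restrict (Set.Ioo (0:ℝ) 1)).withDensity
        (fun y => ENNReal.ofReal (γ * (1 - y) ^ (γ - 1)))) :
    (∀ n : ℕ, 1 ≤ n → ∫ ω, R ω ^ n ∂μ = ∏ i ∈ Finset.Icc 1 n, φ i / ((i:ℝ) + γ))
    ∧ essSup R μ = d
    ∧ (Pim (Set.Ioi (0:ℝ))).toReal + q ≤ d * γ := by
  have hRI : Measurable fun ω => R ω * I ω := hR.mul hI
  -- a.e. membership of R*I in Ioo 0 1
  have hmem : ∀ᵐ ω ∂μ, R ω * I ω ∈ Ioo (0:ℝ) 1 := by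
    have h0 : μ.map (fun ω => R ω * I ω) (Ioo (0:ℝ) 1)ᶜ = 0 := by
      rw [hlaw, withDensity_apply _ measurableSet_Ioo.compl,
        Measure.restrict_restrict measurableSet_Ioo.compl]
      simp
    rw [Measure.map_apply hRI measurableSet_Ioo.compl] at h0
    rw [ae_iff]
    convert h0 using 2
    rfl
  -- φ lower bound
  have hintnn : ∀ lam : ℝ, 0 < lam →
      0 ≤ ∫ x in Set.Ioi (0:ℝ), (1 - Real.exp (-lam * x)) ∂Pim := by
    intro lam hlam
    apply integral_nonneg_of_ae
    filter_upwards [ae_restrict_of_ae hPimsupp] with x hx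
    have h1 : -lam * x ≤ 0 := by nlinarith
    have h2 := Real.exp_le_one_iff.mpr h1
    show (0:ℝ) ≤ 1 - Real.exp (-lam * x)
    linarith
  have hφge : ∀ lam : ℝ, 0 < lam → q + d * lam ≤ φ lam := by
    intro lam hlam
    rw [hφ lam hlam]
    linarith [hintnn lam hlam]
  have hφpos : ∀ i : ℕ, 1 ≤ i → 0 < φ i := by
    intro i hi
    have h1 : (0:ℝ) < i := by exact_mod_cast hi
    have := hφge i h1
    nlinarith
  -- R ≤ d a.e.
  have hUb : ∀ k : ℕ, ∀ᵐ ω ∂μ, R ω ≤ d * (k+2) / (k+1) := by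
    intro k
    have hk1 : (0:ℝ) < (k:ℝ) + 1 := by positivity
    have hk2 : (0:ℝ) < (k:ℝ) + 2 := by positivity
    set ε : ℝ := 1/(d*((k:ℝ)+2)) with hε
    have hεpos : 0 < ε := by positivity
    set a : ℝ := 1/d - ε with ha
    have haval : a = ((k:ℝ)+1)/(d*((k:ℝ)+2)) := by
      rw [ha, hε]; field_simp; ring
    have hapos : 0 < a := by rw [haval]; positivity
    set c : ℝ := d*((k:ℝ)+2)/((k:ℝ)+1) with hc
    have hcpos : 0 < c := by positivity
    have hca : c * a = 1 := by rw [haval, hc]; field_simp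
    have hBpos : 0 < μ {ω | a < I ω} := hIsupp' ε hεpos
    have hAB : μ ({ω | c < R ω} ∩ {ω | a < I ω})
        = μ {ω | c < R ω} * μ {ω | a < I ω} := by
      have h := hindep.measure_inter_preimage_eq_mul (Ioi c) (Ioi a)
        measurableSet_Ioi measurableSet_Ioi
      exact h
    have hzero : μ ({ω | c < R ω} ∩ {ω | a < I ω}) = 0 := by
      have hnull : μ {ω | ¬ (R ω * I ω ∈ Ioo (0:ℝ) 1)} = 0 := by
        rw [← ae_iff]; exact hmem
      apply measure_mono_null ?_ hnull
      rintro ω ⟨h1, h2⟩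
      simp only [mem_setOf_eq] at h1 h2 ⊢
      intro hmem'
      have : 1 < R ω * I ω := by
        calc (1:ℝ) = c * a := hca.symm
        _ < R ω * I ω := by
            apply mul_lt_mul' (le_of_lt h1) h2 (le_of_lt hapos) (lt_trans hcpos h1)
      exact absurd hmem'.2 (not_lt.mpr (le_of_lt this))
    have hA : μ {ω | c < R ω} = 0 := by
      rw [hAB] at hzero
      rcases mul_eq_zero.mp hzero with h | h
      · exact h
      · exact absurd h hBpos.ne'
    rw [show {ω | c < R ω} = {ω | ¬ (R ω ≤ d * ((k:ℝ)+2) / ((k:ℝ)+1))} by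
      ext ω; simp [hc, not_le]] at hA
    rw [ae_iff]
    exact hA
  have hRled : ∀ᵐ ω ∂μ, R ω ≤ d := by
    filter_upwards [ae_all_iff.mpr hUb] with ω hω
    by_contra hcon
    push_neg at hcon
    obtain ⟨k, hk⟩ := exists_nat_one_div_lt (div_pos (by linarith : (0:ℝ) < R ω - d) hd)
    have h1 := hω k
    have hk1 : (0:ℝ) < (k:ℝ) + 1 := by positivity
    have h2 : d * ((k:ℝ)+2) / ((k:ℝ)+1) = d + d * (1/((k:ℝ)+1)) := by
      field_simp; ring
    rw [h2] at h1
    have h3 : d * (1/((k:ℝ)+1)) < d * ((R ω - d)/d) := by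
      apply mul_lt_mul_of_pos_left hk hd
    have h4 : d * ((R ω - d)/d) = R ω - d := by field_simp
    linarith
  -- moments of R*I from the Beta law
  have hdens_meas : Measurable fun y : ℝ => Real.toNNReal (γ * (1 - y) ^ (γ - 1)) := by
    apply Measurable.real_toNNReal
    have h : Measurable fun y : ℝ => 1 - y := measurable_const.sub measurable_id
    measurability
  have hRImom : ∀ n : ℕ, ∫ ω, (R ω * I ω) ^ n ∂μ
      = ∏ i ∈ Finset.Icc 1 n, (i:ℝ)/((i:ℝ)+γ) := by
    intro n
    rw [← beta_mom γ hγ n]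
    have h1 : ∫ ω, (R ω * I ω) ^ n ∂μ
        = ∫ y, y ^ n ∂(μ.map (fun ω => R ω * I ω)) :=
      (integral_map hRI.aemeasurable (measurable_id.pow_const n).aestronglyMeasurable).symm
    rw [h1, hlaw]
    have hde : (fun y : ℝ => ENNReal.ofReal (γ * (1 - y) ^ (γ - 1)))
        = fun y => ((Real.toNNReal (γ * (1 - y) ^ (γ - 1)) : NNReal) : ℝ≥0∞) := rfl
    rw [hde, integral_withDensity_eq_integral_smul hdens_meas]
    apply setIntegral_congr_fun measurableSet_Ioo
    intro y hy
    have h0y : (0:ℝ) < 1 - y := by linarith [hy.2]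
    have h1y : 0 ≤ γ * (1 - y) ^ (γ - 1) := by positivity
    simp only [NNReal.smul_def, Real.coe_toNNReal _ h1y, smul_eq_mul]
  -- integrability
  have hIint : ∀ n : ℕ, Integrable (fun ω => I ω ^ n) μ := by
    intro n
    apply Integrable.mono' (integrable_const ((1/d)^n)) (hI.pow_const n).aestronglyMeasurable
    filter_upwards [hInn, hIsupp] with ω h1 h2
    rw [Real.norm_eq_abs, abs_pow, abs_of_nonneg h1]
    exact pow_le_pow_left₀ h1 h2 n
  have hRint : ∀ n : ℕ, Integrable (fun ω => R ω ^ n) μ := by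
    intro n
    apply Integrable.mono' (integrable_const (d^n)) (hR.pow_const n).aestronglyMeasurable
    filter_upwards [hRnn, hRled] with ω h1 h2
    rw [Real.norm_eq_abs, abs_pow, abs_of_nonneg h1]
    exact pow_le_pow_left₀ h1 h2 n
  have hIpos : ∀ n : ℕ, 0 < ∏ i ∈ Finset.Icc 1 n, (i:ℝ)/φ i := by
    intro n
    apply Finset.prod_pos
    intro i hi
    have hi1 : (0:ℝ) < (i:ℝ) := by
      exact_mod_cast Nat.lt_of_lt_of_le Nat.zero_lt_one (Finset.mem_Icc.mp hi).1
    exact div_pos hi1 (hφpos i (Finset.mem_Icc.mp hi).1)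
  have part1 : ∀ n : ℕ, 1 ≤ n →
      ∫ ω, R ω ^ n ∂μ = ∏ i ∈ Finset.Icc 1 n, φ i / ((i:ℝ) + γ) := by
    intro n hn
    have hcomp : IndepFun (fun ω => R ω ^ n) (fun ω => I ω ^ n) μ :=
      hindep.comp (measurable_id.pow_const n) (measurable_id.pow_const n)
    have hmul := IndepFun.integral_mul_eq_mul_integral hcomp (hRint n).1 (hIint n).1
    have heq : ∫ ω, (R ω * I ω) ^ n ∂μ
        = (∫ ω, R ω ^ n ∂μ) * ∫ ω, I ω ^ n ∂μ := by
      rw [← hmul]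
      apply integral_congr_ae (ae_of_all _ fun ω => ?_)
      exact mul_pow _ _ _
    rw [hRImom n, hImom n hn] at heq
    have hP := hIpos n
    have key : (∏ i ∈ Finset.Icc 1 n, φ i / ((i:ℝ)+γ)) * ∏ i ∈ Finset.Icc 1 n, (i:ℝ)/φ i
        = ∏ i ∈ Finset.Icc 1 n, (i:ℝ)/((i:ℝ)+γ) := by
      rw [← Finset.prod_mul_distrib]
      apply Finset.prod_congr rfl
      intro i hi
      have h1 := hφpos i (Finset.mem_Icc.mp hi).1
      have h2 : (0:ℝ) < (i:ℝ)+γ := by positivity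
      field_simp
    exact mul_right_cancel₀ hP.ne' (heq.symm.trans key.symm)
  -- essSup R μ = d
  haveI : (ae μ).NeBot := ae_neBot.mpr (IsProbabilityMeasure.ne_zero μ)
  have hdmem : μ {ω | d < R ω} = 0 := by
    have h := hRled
    rw [ae_iff] at h
    simpa only [not_le] using h
  have hlow : ∀ a : ℝ, μ {ω | a < R ω} = 0 → d ≤ a := by
    intro a ha
    by_contra hcon
    push_neg at hcon
    have haeR : ∀ᵐ ω ∂μ, R ω ≤ a := by
      rw [ae_iff]
      simpa only [not_le] using ha
    rcases lt_or_ge a 0 with hneg | hpos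
    · have hFalse : ∀ᵐ ω ∂μ, False := by
        filter_upwards [haeR, hRnn] with ω h1 h2
        have : (0:ℝ) ≤ R ω := h2
        linarith
      exact hFalse.exists.elim fun _ h => h
    · set b : ℝ := a / d with hb
      have hbnn : 0 ≤ b := div_nonneg hpos hd.le
      have hblt : b < 1 := by
        rw [hb, div_lt_one hd]
        exact hcon
      have h1 : ∀ᵐ ω ∂μ, R ω * I ω ≤ b := by
        filter_upwards [haeR, hInn, hIsupp, hRnn] with ω hRa hI0 hId hR0
        have h2 : R ω * I ω ≤ a * I ω := mul_le_mul_of_nonneg_right hRa hI0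
        have h3 : a * I ω ≤ a * (1/d) := mul_le_mul_of_nonneg_left hId hpos
        have : a * (1/d) = b := by rw [hb]; ring
        linarith
      have h2 : μ {ω | b < R ω * I ω} = 0 := by
        rw [ae_iff] at h1
        simpa only [not_le] using h1
      have h3 : 0 < μ {ω | b < R ω * I ω} := by
        have hpre : {ω | b < R ω * I ω} = (fun ω => R ω * I ω) ⁻¹' (Ioi b) := rfl
        rw [hpre, ← Measure.map_apply hRI measurableSet_Ioi, hlaw,
          withDensity_apply _ measurableSet_Ioi,
          Measure.restrict_restrict measurableSet_Ioi]
        have hset : Ioi b ∩ Ioo (0:ℝ) 1 = Ioo b 1 := by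
          ext x
          constructor
          · rintro ⟨hx1, _, hx3⟩
            exact ⟨hx1, hx3⟩
          · rintro ⟨hx1, hx2⟩
            exact ⟨hx1, lt_of_le_of_lt hbnn hx1, hx2⟩
        rw [hset]
        have hfmeas : Measurable fun y : ℝ => ENNReal.ofReal (γ * (1 - y) ^ (γ - 1)) :=
          hdens_meas.coe_nnreal_ennreal
        rw [lintegral_pos_iff_support hfmeas,
          Measure.restrict_apply (measurableSet_support hfmeas)]
        have hsub : Ioo b 1 ⊆ Function.support fun y : ℝ => ENNReal.ofReal (γ * (1 - y) ^ (γ - 1)) := by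
          intro y hy
          have h0y : (0:ℝ) < 1 - y := by linarith [hy.2]
          have : (0:ℝ) < γ * (1 - y) ^ (γ - 1) := by positivity
          simp only [Function.mem_support, ne_eq, ENNReal.ofReal_eq_zero, not_le]
          exact this
        rw [inter_eq_right.mpr hsub, Real.volume_Ioo]
        simp only [ENNReal.ofReal_pos]
        linarith
      exact absurd h2 h3.ne'
  have part2 : essSup R μ = d := by
    rw [essSup_eq_sInf]
    apply le_antisymm
    · exact csInf_le ⟨d, fun a ha => hlow a ha⟩ hdmem
    · exact le_csInf ⟨d, hdmem⟩ fun a ha => hlow a ha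
  -- part 3
  have part3 : (Pim (Set.Ioi (0:ℝ))).toReal + q ≤ d * γ := by
    by_contra hcon
    push_neg at hcon
    set P : ℝ := (Pim (Set.Ioi (0:ℝ))).toReal with hP
    set c : ℝ := P + q - d * γ with hc
    have hcpos : 0 < c := by rw [hc]; linarith
    obtain ⟨N, hN1, hNb⟩ : ∃ N : ℕ, 1 ≤ N ∧ ∀ i : ℕ, N ≤ i → d * ((i:ℝ) + γ) + c/2 ≤ φ i := by
      by_cases hfin : Pim (Set.Ioi (0:ℝ)) = ∞
      · refine ⟨1, le_rfl, fun i hi => ?_⟩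
        have hP0 : P = 0 := by rw [hP, hfin]; simp
        have hipos : (0:ℝ) < (i:ℝ) := by exact_mod_cast hi
        have h1 := hφge i hipos
        have hq' : q = d*γ + c := by rw [hc, hP0]; ring
        nlinarith
      · haveI : IsFiniteMeasure (Pim.restrict (Set.Ioi (0:ℝ))) := by
          constructor
          rw [Measure.restrict_apply_univ]
          exact Ne.lt_top hfin
        have htend : Tendsto
            (fun n : ℕ => ∫ x in Set.Ioi (0:ℝ), (1 - Real.exp (-(n:ℝ) * x)) ∂Pim)
            atTop (𝓝 P) := by
          have hPval : P = ∫ x in Set.Ioi (0:ℝ), (1:ℝ) ∂Pim := by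
            rw [setIntegral_const]
            simp [hP]
            rfl
          rw [hPval]
          apply tendsto_integral_of_dominated_convergence (fun _ => (1:ℝ))
          · intro n
            apply Measurable.aestronglyMeasurable
            exact measurable_const.sub ((measurable_id.const_mul _).exp)
          · exact integrable_const 1
          · intro n
            filter_upwards [ae_restrict_of_ae hPimsupp] with x hx
            rw [Real.norm_eq_abs, abs_le]
            have he1 : Real.exp (-(n:ℝ)*x) ≤ 1 := Real.exp_le_one_iff.mpr (by nlinarith)
            have he0 : 0 < Real.exp (-(n:ℝ)*x) := Real.exp_pos _
            constructor <;> linarith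
          · filter_upwards [ae_restrict_of_ae hPimsupp] with x hx
            have h1 : Tendsto (fun n : ℕ => -(n:ℝ)*x) atTop atBot := by
              have h2 : Tendsto (fun n : ℕ => (n:ℝ) * (-x)) atTop atBot :=
                Tendsto.atTop_mul_const_of_neg (by linarith) tendsto_natCast_atTop_atTop
              apply h2.congr
              intro n
              ring
            have h3 : Tendsto (fun n : ℕ => Real.exp (-(n:ℝ)*x)) atTop (𝓝 0) :=
              Real.tendsto_exp_atBot.comp h1
            have h4 := h3.const_sub 1
            rw [sub_zero] at h4
            exact h4
        have hev : ∀ᶠ n : ℕ in atTop,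
            P - c/2 ≤ ∫ x in Set.Ioi (0:ℝ), (1 - Real.exp (-(n:ℝ)*x)) ∂Pim :=
          htend.eventually (eventually_ge_nhds (by linarith))
        obtain ⟨N0, hN0⟩ := eventually_atTop.mp hev
        refine ⟨max N0 1, le_max_right _ _, fun i hi => ?_⟩
        have hi1 : 1 ≤ i := le_trans (le_max_right _ _) hi
        have hipos : (0:ℝ) < (i:ℝ) := by exact_mod_cast hi1
        rw [hφ i hipos]
        have h5 := hN0 i (le_trans (le_max_left _ _) hi)
        have hqP : q + P = d*γ + c := by rw [hc]; ring
        linarith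
    -- product/divergence contradiction
    set t : ℕ → ℝ := fun i => φ i / (d * ((i:ℝ) + γ)) with ht
    have htpos : ∀ i : ℕ, 1 ≤ i → 0 < t i := by
      intro i hi
      exact div_pos (hφpos i hi) (by positivity)
    have hApos : 0 < ∏ i ∈ Finset.Ico 1 N, t i :=
      Finset.prod_pos fun i hi => htpos i (Finset.mem_Ico.mp hi).1
    have hprod_le : ∀ n : ℕ, 1 ≤ n → ∏ i ∈ Finset.Icc 1 n, t i ≤ 1 := by
      intro n hn
      have hb : ∫ ω, R ω ^ n ∂μ ≤ d ^ n := by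
        calc ∫ ω, R ω ^ n ∂μ ≤ ∫ _ω, d ^ n ∂μ := by
              apply integral_mono_ae (hRint n) (integrable_const _)
              filter_upwards [hRnn, hRled] with ω h1 h2
              exact pow_le_pow_left₀ h1 h2 n
          _ = d ^ n := by simp
      rw [part1 n hn] at hb
      have hdn : (0:ℝ) < d ^ n := by positivity
      have hprod_eq : ∏ i ∈ Finset.Icc 1 n, t i
          = (∏ i ∈ Finset.Icc 1 n, φ i / ((i:ℝ) + γ)) / d ^ n := by
        rw [eq_div_iff hdn.ne']
        rw [show (d:ℝ)^n = ∏ _i ∈ Finset.Icc 1 n, d by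
          rw [Finset.prod_const, Nat.card_Icc]; simp]
        rw [← Finset.prod_mul_distrib]
        apply Finset.prod_congr rfl
        intro i hi
        have h2 : (0:ℝ) < (i:ℝ) + γ := by positivity
        simp only [ht]
        field_simp
      rw [hprod_eq, div_le_one hdn]
      exact hb
    set u : ℕ → ℝ := fun i => c / (2 * d * ((i:ℝ)+γ)) with hu
    have hupos : ∀ i : ℕ, 0 ≤ u i := by
      intro i
      simp only [hu]
      positivity
    have hfactor : ∀ i : ℕ, N ≤ i → 1 + u i ≤ t i := by
      intro i hi
      have h2 : (0:ℝ) < d * ((i:ℝ)+γ) := by positivity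
      simp only [ht, hu]
      rw [le_div_iff₀ h2]
      have hexp : (1 + c / (2 * d * ((i:ℝ)+γ))) * (d * ((i:ℝ)+γ))
          = d*((i:ℝ)+γ) + c/2 := by
        field_simp
      rw [hexp]
      exact hNb i hi
    have hsplit : ∀ n : ℕ, N ≤ n →
        (∏ i ∈ Finset.Ico 1 N, t i) * (∏ i ∈ Finset.Icc N n, t i)
          = ∏ i ∈ Finset.Icc 1 n, t i := by
      intro n hn
      rw [← Finset.prod_union (by
        rw [Finset.disjoint_left]
        intro x hx1 hx2
        rw [Finset.mem_Ico] at hx1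
        rw [Finset.mem_Icc] at hx2
        omega)]
      apply Finset.prod_congr ?_ fun _ _ => rfl
      ext x
      simp only [Finset.mem_union, Finset.mem_Ico, Finset.mem_Icc]
      omega
    have hbound : ∀ n : ℕ, N ≤ n →
        ∑ i ∈ Finset.Icc N n, u i ≤ 1 / (∏ i ∈ Finset.Ico 1 N, t i) := by
      intro n hn
      have h1 := hprod_le n (le_trans hN1 hn)
      rw [← hsplit n hn] at h1
      have h2 : 1 + ∑ i ∈ Finset.Icc N n, u i ≤ ∏ i ∈ Finset.Icc N n, (1 + u i) :=
        prod_one_add_ge _ _ (fun i _ => hupos i)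
      have h3 : ∏ i ∈ Finset.Icc N n, (1 + u i) ≤ ∏ i ∈ Finset.Icc N n, t i := by
        apply Finset.prod_le_prod
        · intro i _
          have := hupos i
          linarith
        · intro i hi
          exact hfactor i (Finset.mem_Icc.mp hi).1
      have h4 : (∏ i ∈ Finset.Ico 1 N, t i) * (1 + ∑ i ∈ Finset.Icc N n, u i) ≤ 1 :=
        le_trans (mul_le_mul_of_nonneg_left (h2.trans h3) hApos.le) h1
      have h5 : 0 ≤ ∑ i ∈ Finset.Icc N n, u i :=
        Finset.sum_nonneg fun i _ => hupos i
      rw [le_div_iff₀ hApos]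
      nlinarith
    have hdvg : Tendsto (fun n : ℕ => ∑ i ∈ Finset.Icc N n, u i) atTop atTop := by
      have hns : ¬ Summable u := by
        intro hs
        have hcmp : Summable (fun i : ℕ => 1/((i:ℝ)+1)) := by
          apply Summable.of_nonneg_of_le (fun i => by positivity) (fun i => ?_)
            (hs.mul_left ((2*d*(γ+1))/c))
          have h6 : (0:ℝ) < (i:ℝ)+γ := by positivity
          have h7 : (2*d*(γ+1))/c * u i = (γ+1)/((i:ℝ)+γ) := by
            simp only [hu]
            field_simp
          rw [h7, div_le_div_iff₀ (by positivity) h6]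
          nlinarith [Nat.cast_nonneg (α := ℝ) i]
        have h8 : Summable (fun n : ℕ => 1/((n:ℕ):ℝ)) := by
          apply (summable_nat_add_iff 1).mp
          apply hcmp.congr
          intro i
          push_cast
          ring
        exact Real.not_summable_one_div_natCast h8
      have hT : Tendsto (fun n : ℕ => ∑ i ∈ Finset.range n, u i) atTop atTop :=
        (not_summable_iff_tendsto_nat_atTop_of_nonneg hupos).mp hns
      have hT2 : Tendsto (fun n : ℕ => (∑ i ∈ Finset.range (n+1), u i)
          - ∑ i ∈ Finset.range N, u i) atTop atTop :=
        tendsto_atTop_add_const_right _ _ (hT.comp (tendsto_add_atTop_nat 1))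
      apply hT2.congr'
      filter_upwards [eventually_ge_atTop N] with n hn
      rw [← Finset.Ico_add_one_right_eq_Icc, Finset.sum_Ico_eq_sub _ (by omega)]
    obtain ⟨n, hn2, hn1⟩ :=
      ((hdvg.eventually_gt_atTop (1 / (∏ i ∈ Finset.Ico 1 N, t i))).and
        (eventually_ge_atTop N)).exists
    exact absurd (hbound n hn1) (not_le.mpr hn2)
  exact ⟨part1, part2, part3⟩
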